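/- For the group SL(2,ℤ) of 2×2 integer matrices with determinant 1, Φ_f(SL(2,ℤ)) equals the center of SL(2,ℤ), which is the subgroup {I, −I} of order 2. -/

import Mathlib

/-- `phiF G` is the intersection of all maximal subgroups of finite index in `G`
(equal to `G` itself, i.e. `⊤`, if there are no such subgroups). -/
def phiF (G : Type*) [Group G] : Subgroup G :=
  ⨅ M ∈ {M : Subgroup G | IsCoatom M ∧ M.FiniteIndex}, M

open Pointwise Matrix Matrix.SpecialLinearGroup

namespace SL2Aux

abbrev SL2 (R : Type*) [CommRing R] := Matrix.SpecialLinearGroup (Fin 2) R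

variable {R : Type*} [CommRing R]

/-! ### Elementary matrices and the Borel subgroups -/

def E12 (t : R) : SL2 R := ⟨!![1, t; 0, 1], by simp [Matrix.det_fin_two_of]⟩
def E21 (t : R) : SL2 R := ⟨!![1, 0; t, 1], by simp [Matrix.det_fin_two_of]⟩

lemma E12_mul (s t : R) : E12 s * E12 t = E12 (s + t) := by
  ext i j
  rw [Matrix.SpecialLinearGroup.coe_mul]
  fin_cases i <;> fin_cases j <;>
    simp [E12, Matrix.mul_apply, Fin.sum_univ_two] <;> ring

lemma E21_mul (s t : R) : E21 s * E21 t = E21 (s + t) := by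
  ext i j
  rw [Matrix.SpecialLinearGroup.coe_mul]
  fin_cases i <;> fin_cases j <;>
    simp [E21, Matrix.mul_apply, Fin.sum_univ_two] <;> ring

lemma E12_zero : (E12 (0 : R)) = 1 := by
  ext i j; fin_cases i <;> fin_cases j <;> simp [E12]

lemma E21_zero : (E21 (0 : R)) = 1 := by
  ext i j; fin_cases i <;> fin_cases j <;> simp [E21]

def E12hom : Multiplicative R →* SL2 R where
  toFun t := E12 t.toAdd
  map_one' := E12_zero
  map_mul' _ _ := (E12_mul _ _).symm

def E21hom : Multiplicative R →* SL2 R where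
  toFun t := E21 t.toAdd
  map_one' := E21_zero
  map_mul' _ _ := (E21_mul _ _).symm

lemma E12_zpow (t : R) (n : ℤ) : E12 t ^ n = E12 (n * t) := by
  have h := map_zpow E12hom (Multiplicative.ofAdd t) n
  simpa [E12hom, ← zsmul_eq_mul] using h.symm

lemma E21_zpow (t : R) (n : ℤ) : E21 t ^ n = E21 (n * t) := by
  have h := map_zpow E21hom (Multiplicative.ofAdd t) n
  simpa [E21hom, ← zsmul_eq_mul] using h.symm

def Borel (R : Type*) [CommRing R] : Subgroup (SL2 R) where
  carrier := {M | M 1 0 = 0}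
  one_mem' := by simp [Set.mem_setOf_eq]
  mul_mem' := by
    intro a b ha hb
    simp only [Set.mem_setOf_eq] at *
    show (a * b) 1 0 = 0
    rw [show ((a * b : SL2 R) : Matrix (Fin 2) (Fin 2) R) = a.1 * b.1 from rfl]
    simp [Matrix.mul_apply, Fin.sum_univ_two, ha, hb]
  inv_mem' := by
    intro a ha
    simp only [Set.mem_setOf_eq] at *
    show (a⁻¹) 1 0 = 0
    rw [SL2_inv_expl a]
    simp [ha]

def Borel' (R : Type*) [CommRing R] : Subgroup (SL2 R) where
  carrier := {M | M 0 1 = 0}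
  one_mem' := by simp [Set.mem_setOf_eq]
  mul_mem' := by
    intro a b ha hb
    simp only [Set.mem_setOf_eq] at *
    show (a * b) 0 1 = 0
    rw [show ((a * b : SL2 R) : Matrix (Fin 2) (Fin 2) R) = a.1 * b.1 from rfl]
    simp [Matrix.mul_apply, Fin.sum_univ_two, ha, hb]
  inv_mem' := by
    intro a ha
    simp only [Set.mem_setOf_eq] at *
    show (a⁻¹) 0 1 = 0
    rw [SL2_inv_expl a]
    simp [ha]

lemma mem_Borel_iff {M : SL2 R} : M ∈ Borel R ↔ M 1 0 = 0 := Iff.rfl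
lemma mem_Borel'_iff {M : SL2 R} : M ∈ Borel' R ↔ M 0 1 = 0 := Iff.rfl

lemma E12_mem_Borel (t : R) : E12 t ∈ Borel R := by rw [mem_Borel_iff]; simp [E12]
lemma E21_mem_Borel' (t : R) : E21 t ∈ Borel' R := by rw [mem_Borel'_iff]; simp [E21]

lemma det_eq (M : SL2 R) : M 0 0 * M 1 1 - M 0 1 * M 1 0 = 1 := by
  have h := M.2
  rwa [Matrix.det_fin_two] at h

/-! ### Bruhat-type decomposition and generation results over `ZMod p` -/

variable {F : Type*} [Field F]

lemma decomp (M : SL2 F) (hc : M 1 0 ≠ 0) :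
    M = E12 ((M 0 0 - 1) / M 1 0) * E21 (M 1 0) * E12 ((M 1 1 - 1) / M 1 0) := by
  have hdet := det_eq M
  ext i j
  fin_cases i <;> fin_cases j <;>
    · show _ = ((E12 _ * E21 _ * E12 _ : SL2 F) : Matrix (Fin 2) (Fin 2) F) _ _
      rw [Matrix.SpecialLinearGroup.coe_mul, Matrix.SpecialLinearGroup.coe_mul]
      simp only [E12, E21,
        show ∀ (A B : SL2 F),
          ((A * B : SL2 F) : Matrix (Fin 2) (Fin 2) F) = A.1 * B.1 from fun _ _ => rfl]
      simp [Matrix.mul_apply, Fin.sum_univ_two]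
      try field_simp
      try ring_nf
      try linear_combination hdet
      try linear_combination -hdet

lemma decomp' (M : SL2 F) (hb : M 0 1 ≠ 0) :
    M = E21 ((M 1 1 - 1) / M 0 1) * E12 (M 0 1) * E21 ((M 0 0 - 1) / M 0 1) := by
  have hdet := det_eq M
  ext i j
  fin_cases i <;> fin_cases j <;>
    · show _ = ((E21 _ * E12 _ * E21 _ : SL2 F) : Matrix (Fin 2) (Fin 2) F) _ _
      rw [Matrix.SpecialLinearGroup.coe_mul, Matrix.SpecialLinearGroup.coe_mul]
      simp only [E12, E21,
        show ∀ (A B : SL2 F),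
          ((A * B : SL2 F) : Matrix (Fin 2) (Fin 2) F) = A.1 * B.1 from fun _ _ => rfl]
      simp [Matrix.mul_apply, Fin.sum_univ_two]
      try field_simp
      try ring_nf
      try linear_combination hdet
      try linear_combination -hdet

lemma mem_of_elem (K : Subgroup (SL2 F)) (h12 : ∀ t, E12 t ∈ K) (h21 : ∀ t, E21 t ∈ K)
    (M : SL2 F) : M ∈ K := by
  by_cases hc : M 1 0 = 0
  · have hd : M 1 1 ≠ 0 := by
      intro h
      have := det_eq M
      rw [hc, h] at this
      simp at this
    have hc' : (M * E21 1).1 1 0 ≠ 0 := by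
      have h : (M * E21 1).1 1 0 = M 1 0 * 1 + M 1 1 * 1 := by
        rw [Matrix.SpecialLinearGroup.coe_mul]
        simp [E21, Matrix.mul_apply, Fin.sum_univ_two]
      rw [h, hc]
      simpa using hd
    have h1 : M * E21 1 ∈ K := by
      rw [decomp (M * E21 1) hc']
      exact mul_mem (mul_mem (h12 _) (h21 _)) (h12 _)
    have h2 : M = (M * E21 1) * E21 (-1) := by
      rw [mul_assoc, E21_mul]
      norm_num [E21_zero]
    rw [h2]
    exact mul_mem h1 (h21 _)
  · rw [decomp M hc]
    exact mul_mem (mul_mem (h12 _) (h21 _)) (h12 _)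

lemma borel_gen {p : ℕ} [Fact p.Prime] (K : Subgroup (SL2 (ZMod p)))
    (hB : Borel (ZMod p) ≤ K) (g : SL2 (ZMod p)) (hg : g ∈ K) (hc : g 1 0 ≠ 0) : K = ⊤ := by
  have h12 : ∀ t, E12 t ∈ K := fun t => hB (E12_mem_Borel t)
  have hc' : E21 (g 1 0) ∈ K := by
    obtain ⟨u, c', v, hg', hc'⟩ : ∃ u c' v, g = E12 u * E21 c' * E12 v ∧ c' = g 1 0 :=
      ⟨_, _, _, decomp g hc, rfl⟩
    rw [← hc']
    have h : E21 c' = (E12 u)⁻¹ * g * (E12 v)⁻¹ := by rw [hg']; group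
    rw [h]
    exact mul_mem (mul_mem (inv_mem (h12 _)) hg) (inv_mem (h12 _))
  have h21 : ∀ t, E21 t ∈ K := by
    intro t
    obtain ⟨n, hn⟩ := ZMod.intCast_surjective (t / g 1 0)
    have : E21 (g 1 0) ^ n = E21 t := by
      rw [E21_zpow, hn, div_mul_cancel₀ _ hc]
    rw [← this]
    exact zpow_mem hc' n
  rw [Subgroup.eq_top_iff']
  exact fun M => mem_of_elem K h12 h21 M

lemma borel'_gen {p : ℕ} [Fact p.Prime] (K : Subgroup (SL2 (ZMod p)))
    (hB : Borel' (ZMod p) ≤ K) (g : SL2 (ZMod p)) (hg : g ∈ K) (hb : g 0 1 ≠ 0) : K = ⊤ := by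
  have h21 : ∀ t, E21 t ∈ K := fun t => hB (E21_mem_Borel' t)
  have hb' : E12 (g 0 1) ∈ K := by
    obtain ⟨u, b', v, hg', hb'⟩ : ∃ u b' v, g = E21 u * E12 b' * E21 v ∧ b' = g 0 1 :=
      ⟨_, _, _, decomp' g hb, rfl⟩
    rw [← hb']
    have h : E12 b' = (E21 u)⁻¹ * g * (E21 v)⁻¹ := by rw [hg']; group
    rw [h]
    exact mul_mem (mul_mem (inv_mem (h21 _)) hg) (inv_mem (h21 _))
  have h12 : ∀ t, E12 t ∈ K := by
    intro t
    obtain ⟨n, hn⟩ := ZMod.intCast_surjective (t / g 0 1)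
    have : E12 (g 0 1) ^ n = E12 t := by
      rw [E12_zpow, hn, div_mul_cancel₀ _ hb]
    rw [← this]
    exact zpow_mem hb' n
  rw [Subgroup.eq_top_iff']
  exact fun M => mem_of_elem K h12 h21 M

lemma map_surjective (p : ℕ) [Fact p.Prime] :
    Function.Surjective (map (n := Fin 2) (Int.castRingHom (ZMod p))) := by
  rw [← MonoidHom.range_eq_top]
  rw [Subgroup.eq_top_iff']
  intro M
  refine mem_of_elem _ ?_ ?_ M
  · intro t
    obtain ⟨m, rfl⟩ := ZMod.intCast_surjective t
    exact ⟨E12 m, by ext i j; rw [map_apply_coe]; fin_cases i <;> fin_cases j <;> simp [E12]⟩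
  · intro t
    obtain ⟨m, rfl⟩ := ZMod.intCast_surjective t
    exact ⟨E21 m, by ext i j; rw [map_apply_coe]; fin_cases i <;> fin_cases j <;> simp [E21]⟩

/-! ### Generic lemmas about `phiF` -/

variable {G : Type*} [Group G]

lemma exists_coatom_above (H : Subgroup G) (hne : H ≠ ⊤) (hfi : H.index ≠ 0) :
    ∃ M : Subgroup G, IsCoatom M ∧ M.FiniteIndex ∧ H ≤ M := by
  set T : Set ℕ := {n | ∃ K : Subgroup G, H ≤ K ∧ K ≠ ⊤ ∧ K.index = n} with hT
  have hTne : T.Nonempty := ⟨H.index, H, le_rfl, hne, rfl⟩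
  obtain ⟨K, hHK, hKne, hKidx⟩ := Nat.sInf_mem hTne
  have hKfi : K.index ≠ 0 := fun h0 =>
    hfi (Nat.eq_zero_of_zero_dvd (h0 ▸ Subgroup.index_dvd_of_le hHK))
  refine ⟨K, ⟨hKne, ?_⟩, ⟨hKfi⟩, hHK⟩
  intro K' hlt
  by_contra hK'ne
  have hK'T : K'.index ∈ T := ⟨K', hHK.trans hlt.le, hK'ne, rfl⟩
  have hle : sInf T ≤ K'.index := Nat.sInf_le hK'T
  have hrel := Subgroup.relIndex_mul_index hlt.le
  have hr1 : K.relIndex K' ≠ 1 := by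
    intro h1
    exact hlt.ne ((le_antisymm hlt.le (Subgroup.relIndex_eq_one.mp h1)))
  have hr0 : K.relIndex K' ≠ 0 := by
    intro h0
    rw [h0, zero_mul] at hrel
    exact hKfi hrel.symm
  have hK'0 : K'.index ≠ 0 := by
    intro h0
    rw [h0, mul_zero] at hrel
    exact hKfi hrel.symm
  have : K'.index < K.index := by
    have h2 : 2 ≤ K.relIndex K' := by omega
    nlinarith [Nat.pos_of_ne_zero hK'0, hrel]
  omega

lemma mem_phiF_iff {x : G} :
    x ∈ phiF G ↔ ∀ M : Subgroup G, IsCoatom M → M.FiniteIndex → x ∈ M := by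
  simp [phiF, Subgroup.mem_iInf, Set.mem_setOf_eq, and_imp]

lemma not_mem_phiF {x : G} (H : Subgroup G) (hne : H ≠ ⊤) (hfi : H.index ≠ 0)
    (hgen : ∀ K : Subgroup G, H ≤ K → x ∈ K → K = ⊤) : x ∉ phiF G := by
  intro hx
  obtain ⟨M, hM, hMfi, hHM⟩ := exists_coatom_above H hne hfi
  exact hM.1 (hgen M hHM (mem_phiF_iff.mp hx M hM hMfi))

/-! ### The center of `SL(2, ℤ)` -/

def wZ : SL2 ℤ := ⟨!![0, -1; 1, 0], by simp [Matrix.det_fin_two_of]⟩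

lemma wZ_mul_wZ : wZ * wZ = -1 := by
  ext i j
  fin_cases i <;> fin_cases j <;>
    · rw [Matrix.SpecialLinearGroup.coe_mul, Matrix.SpecialLinearGroup.coe_neg]
      simp [wZ, Matrix.mul_apply, Fin.sum_univ_two]

lemma one_ne_neg_one : (1 : SL2 ℤ) ≠ -1 := by
  intro h
  have h00 := congrFun (congrFun (congrArg Subtype.val h) 0) 0
  rw [Matrix.SpecialLinearGroup.coe_neg] at h00
  simp at h00

lemma center_set_eq :
    (Subgroup.center (SL2 ℤ) : Set (SL2 ℤ)) = {1, -1} := by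
  ext x
  simp only [SetLike.mem_coe, Set.mem_insert_iff, Set.mem_singleton_iff]
  constructor
  · intro hx
    obtain ⟨r, hr, hrx⟩ := Matrix.SpecialLinearGroup.mem_center_iff.mp hx
    rw [Fintype.card_fin, pow_two] at hr
    rcases Int.eq_one_or_neg_one_of_mul_eq_one hr with rfl | rfl
    · left
      apply Subtype.ext
      rw [← hrx, _root_.map_one]
      rfl
    · right
      apply Subtype.ext
      rw [← hrx, _root_.map_neg, _root_.map_one, Matrix.SpecialLinearGroup.coe_neg,
        Matrix.SpecialLinearGroup.coe_one]
  · rintro (rfl | rfl)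
    · exact Subgroup.one_mem _
    · refine Matrix.SpecialLinearGroup.mem_center_iff.mpr ⟨-1, by norm_num, ?_⟩
      rw [_root_.map_neg, _root_.map_one, Matrix.SpecialLinearGroup.coe_neg,
        Matrix.SpecialLinearGroup.coe_one]

lemma center_card : Nat.card (Subgroup.center (SL2 ℤ)) = 2 := by
  have h : Nat.card (Subgroup.center (SL2 ℤ)) =
      ((Subgroup.center (SL2 ℤ) : Set (SL2 ℤ))).ncard := by
    rw [← Nat.card_coe_set_eq]
    rfl
  rw [h, center_set_eq, Set.ncard_pair one_ne_neg_one]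

/-! ### Every finite-index maximal subgroup contains `-1` -/

lemma neg_one_mem_coatom (M : Subgroup (SL2 ℤ)) (hM : IsCoatom M) (hMfi : M.FiniteIndex) :
    (-1 : SL2 ℤ) ∈ M := by
  by_contra hne
  haveI hNnormal : (Subgroup.zpowers (-1 : SL2 ℤ)).Normal := by
    constructor
    intro n hn g
    obtain ⟨k, rfl⟩ := Subgroup.mem_zpowers_iff.mp hn
    have hcomm : Commute g ((-1 : SL2 ℤ) ^ k) := ((Commute.neg_one_right g).zpow_right k)
    have heq : g * (-1 : SL2 ℤ) ^ k * g⁻¹ = (-1 : SL2 ℤ) ^ k := by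
      rw [hcomm.eq, mul_assoc, mul_inv_cancel, mul_one]
    rw [heq]
    exact hn
  have hKtop : M ⊔ Subgroup.zpowers (-1 : SL2 ℤ) = ⊤ := by
    apply hM.2
    refine lt_of_le_of_ne le_sup_left (fun h => hne ?_)
    have : (-1 : SL2 ℤ) ∈ M ⊔ Subgroup.zpowers (-1 : SL2 ℤ) :=
      Subgroup.mem_sup_right (Subgroup.mem_zpowers _)
    rwa [← h] at this
  have hmem : ∀ g : SL2 ℤ, g ∈ M ∨ -g ∈ M := by
    intro g
    have hg : g ∈ (M : Set (SL2 ℤ)) * (Subgroup.zpowers (-1 : SL2 ℤ) : Set (SL2 ℤ)) := by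
      rw [← Subgroup.mul_normal M (Subgroup.zpowers (-1 : SL2 ℤ)), hKtop]
      trivial
    obtain ⟨m, hm, z, hz, hmz⟩ := hg
    obtain ⟨k, rfl⟩ := Subgroup.mem_zpowers_iff.mp hz
    rcases Int.even_or_odd k with he | ho
    · left
      have : m * ((-1 : SL2 ℤ)) ^ k = m := by rw [Even.neg_one_zpow he, mul_one]
      rw [← hmz]
      simpa [this] using hm
    · right
      obtain ⟨j, rfl⟩ := ho
      have h1 : ((-1 : SL2 ℤ)) ^ (2 * j + 1) = -1 := by
        rw [_root_.zpow_add, zpow_one, show (2 * j : ℤ) = j + j by ring,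
          Even.neg_one_zpow ⟨j, rfl⟩, one_mul]
      rw [← hmz]
      have : -(m * ((-1 : SL2 ℤ)) ^ (2 * j + 1)) = m := by rw [h1]; simp
      simpa [this] using hm
  have hsur : Function.Surjective
      (fun b : Bool => (QuotientGroup.mk (cond b 1 (-1)) : SL2 ℤ ⧸ M)) := by
    intro q
    induction q using QuotientGroup.induction_on with
    | _ g =>
      rcases hmem g with h | h
      · exact ⟨true, (QuotientGroup.eq).mpr (by simpa using h)⟩
      · exact ⟨false, (QuotientGroup.eq).mpr (by simpa [inv_neg, neg_one_mul] using h)⟩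
  have hle2 : M.index ≤ 2 := by
    have hcard := Nat.card_le_card_of_surjective _ hsur
    rw [Subgroup.index_eq_card]
    simpa [Nat.card_eq_fintype_card] using hcard
  have h1 : M.index ≠ 1 := fun h => hM.1 (Subgroup.index_eq_one.mp h)
  have h0 : M.index ≠ 0 := hMfi.index_ne_zero
  have hidx : M.index = 2 := by omega
  have hsq := Subgroup.mul_self_mem_of_index_two hidx wZ
  rw [wZ_mul_wZ] at hsq
  exact hne hsq

/-! ### `phiF (SL2 ℤ) ≤ center` -/

lemma cast_entry_ne_zero {c : ℤ} (hc : c ≠ 0) {p : ℕ}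
    (hple : c.natAbs + 1 ≤ p) : ((c : ℤ) : ZMod p) ≠ 0 := by
  intro h0
  rw [ZMod.intCast_zmod_eq_zero_iff_dvd] at h0
  have h1 : p ∣ c.natAbs := by
    have := Int.natAbs_dvd_natAbs.mpr h0
    simpa using this
  have := Nat.le_of_dvd (Int.natAbs_pos.mpr hc) h1
  omega

section entries
variable {p : ℕ} [Fact p.Prime]

lemma f_entry (x : SL2 ℤ) (i j : Fin 2) :
    (map (n := Fin 2) (Int.castRingHom (ZMod p)) x) i j = ((x i j : ℤ) : ZMod p) := by
  simp [map_apply_coe]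

lemma ker_le_comap (H : Subgroup (SL2 (ZMod p))) :
    (map (n := Fin 2) (Int.castRingHom (ZMod p))).ker ≤
      H.comap (map (n := Fin 2) (Int.castRingHom (ZMod p))) := by
  intro y hy
  rw [MonoidHom.mem_ker] at hy
  rw [Subgroup.mem_comap, hy]
  exact H.one_mem

lemma comap_index_ne_zero (H : Subgroup (SL2 (ZMod p))) :
    (H.comap (map (n := Fin 2) (Int.castRingHom (ZMod p)))).index ≠ 0 := by
  set f := map (n := Fin 2) (Int.castRingHom (ZMod p)) with hf
  intro h0
  have hdvd := Subgroup.index_dvd_of_le (ker_le_comap H)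
  rw [h0] at hdvd
  have hker : f.ker.index = Nat.card f.range := Subgroup.index_ker f
  have : f.ker.index ≠ 0 := by
    rw [hker]
    exact Nat.card_pos.ne'
  exact this (Nat.eq_zero_of_zero_dvd hdvd)

end entries

lemma entry_c_eq_zero {x : SL2 ℤ} (hx : x ∈ phiF (SL2 ℤ)) : x 1 0 = 0 := by
  by_contra hc
  obtain ⟨p, hple, hp⟩ := Nat.exists_infinite_primes ((x 1 0).natAbs + 1)
  haveI : Fact p.Prime := ⟨hp⟩
  set f := map (n := Fin 2) (Int.castRingHom (ZMod p)) with hf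
  have hcast : ((x 1 0 : ℤ) : ZMod p) ≠ 0 := cast_entry_ne_zero hc hple
  refine not_mem_phiF ((Borel (ZMod p)).comap f) ?_ (comap_index_ne_zero _) ?_ hx
  · intro htop
    have hw : wZ ∈ (Borel (ZMod p)).comap f := htop ▸ Subgroup.mem_top wZ
    rw [Subgroup.mem_comap, mem_Borel_iff, f_entry] at hw
    simp [wZ] at hw
  · intro K hHK hxK
    have hmap : Subgroup.map f K = ⊤ := by
      refine borel_gen _ ?_ (f x) (Subgroup.mem_map_of_mem f hxK) ?_
      · have h := Subgroup.map_comap_eq_self_of_surjective (map_surjective p) (Borel (ZMod p))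
        calc Borel (ZMod p) = Subgroup.map f ((Borel (ZMod p)).comap f) := h.symm
          _ ≤ Subgroup.map f K := Subgroup.map_mono hHK
      · rw [f_entry]
        exact hcast
    have hcm := Subgroup.comap_map_eq f K
    rw [hmap, Subgroup.comap_top] at hcm
    rw [sup_eq_left.mpr ((ker_le_comap (Borel (ZMod p))).trans hHK)] at hcm
    exact hcm.symm

lemma entry_b_eq_zero {x : SL2 ℤ} (hx : x ∈ phiF (SL2 ℤ)) : x 0 1 = 0 := by
  by_contra hb
  obtain ⟨p, hple, hp⟩ := Nat.exists_infinite_primes ((x 0 1).natAbs + 1)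
  haveI : Fact p.Prime := ⟨hp⟩
  set f := map (n := Fin 2) (Int.castRingHom (ZMod p)) with hf
  have hcast : ((x 0 1 : ℤ) : ZMod p) ≠ 0 := cast_entry_ne_zero hb hple
  refine not_mem_phiF ((Borel' (ZMod p)).comap f) ?_ (comap_index_ne_zero _) ?_ hx
  · intro htop
    have hw : wZ ∈ (Borel' (ZMod p)).comap f := htop ▸ Subgroup.mem_top wZ
    rw [Subgroup.mem_comap, mem_Borel'_iff, f_entry] at hw
    rw [show wZ 0 1 = -1 from rfl] at hw
    simp at hw
  · intro K hHK hxK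
    have hmap : Subgroup.map f K = ⊤ := by
      refine borel'_gen _ ?_ (f x) (Subgroup.mem_map_of_mem f hxK) ?_
      · have h := Subgroup.map_comap_eq_self_of_surjective (map_surjective p) (Borel' (ZMod p))
        calc Borel' (ZMod p) = Subgroup.map f ((Borel' (ZMod p)).comap f) := h.symm
          _ ≤ Subgroup.map f K := Subgroup.map_mono hHK
      · rw [f_entry]
        exact hcast
    have hcm := Subgroup.comap_map_eq f K
    rw [hmap, Subgroup.comap_top] at hcm
    rw [sup_eq_left.mpr ((ker_le_comap (Borel' (ZMod p))).trans hHK)] at hcm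
    exact hcm.symm

lemma eq_pm_one_of_mem_phiF {x : SL2 ℤ} (hx : x ∈ phiF (SL2 ℤ)) : x = 1 ∨ x = -1 := by
  have hc := entry_c_eq_zero hx
  have hb := entry_b_eq_zero hx
  have hdet := det_eq x
  rw [hb, hc] at hdet
  simp at hdet
  rcases Int.eq_one_or_neg_one_of_mul_eq_one' hdet with ⟨h1, h2⟩ | ⟨h1, h2⟩
  · left
    ext i j
    fin_cases i <;> fin_cases j <;> simp [h1, h2, hb, hc]
  · right
    ext i j
    fin_cases i <;> fin_cases j <;>
      · rw [Matrix.SpecialLinearGroup.coe_neg]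
        simp [h1, h2, hb, hc]

end SL2Aux

/-- `Φ_f(SL(2,ℤ))` equals the center of `SL(2,ℤ)`, which is the
subgroup `{I, -I}` of order 2. -/
theorem phiF_SL2Z_eq_center :
    phiF (Matrix.SpecialLinearGroup (Fin 2) ℤ) =
        Subgroup.center (Matrix.SpecialLinearGroup (Fin 2) ℤ) ∧
      (Subgroup.center (Matrix.SpecialLinearGroup (Fin 2) ℤ) :
          Set (Matrix.SpecialLinearGroup (Fin 2) ℤ)) = {1, -1} ∧
      Nat.card (Subgroup.center (Matrix.SpecialLinearGroup (Fin 2) ℤ)) = 2 := by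
  have hset := SL2Aux.center_set_eq
  refine ⟨?_, hset, SL2Aux.center_card⟩
  apply le_antisymm
  · intro x hx
    have h := SL2Aux.eq_pm_one_of_mem_phiF hx
    have hmem : x ∈ (Subgroup.center (SL2Aux.SL2 ℤ) : Set (SL2Aux.SL2 ℤ)) := by
      rw [hset]
      rcases h with rfl | rfl
      · exact Set.mem_insert _ _
      · exact Set.mem_insert_of_mem _ rfl
    exact hmem
  · intro x hx
    rw [SL2Aux.mem_phiF_iff]
    intro M hM hMfi
    have hx' : x ∈ ({1, -1} : Set (SL2Aux.SL2 ℤ)) := hset ▸ hx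
    rcases hx' with rfl | h
    · exact M.one_mem
    · rw [Set.mem_singleton_iff] at h
      subst h
      exact SL2Aux.neg_one_mem_coatom M hM hMfi
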